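/- Let V = (v, w) : ℝ² → ℝ² be a C¹ vector field which is unit (v² + w² ≡ 1) and divergence-free (∂v/∂x + ∂w/∂y ≡ 0). Then the directional derivatives of v and w in the direction of the perpendicular field V⊥ = (w, -v) vanish identically: ⟨∇v, V⊥⟩ ≡ 0 and ⟨∇w, V⊥⟩ ≡ 0. -/

import Mathlib

/-- A C¹ unit divergence-free planar vector field V = (v,w) has
⟨∇v, V⊥⟩ ≡ 0 and ⟨∇w, V⊥⟩ ≡ 0, where V⊥ = (w, -v). -/
theorem stmt_0 (V : ℝ × ℝ → ℝ × ℝ) (hV : ContDiff ℝ 1 V)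
    (hunit : ∀ p, (V p).1 ^ 2 + (V p).2 ^ 2 = 1)
    (hdiv : ∀ p, (fderiv ℝ V p (1, 0)).1 + (fderiv ℝ V p (0, 1)).2 = 0) :
    ∀ p : ℝ × ℝ,
      fderiv ℝ (fun q => (V q).1) p ((V p).2, -(V p).1) = 0 ∧
      fderiv ℝ (fun q => (V q).2) p ((V p).2, -(V p).1) = 0 := by
  intro p
  have hd : DifferentiableAt ℝ V p :=
    (hV.differentiable one_ne_zero).differentiableAt
  set L := fderiv ℝ V p with hL
  have hv : HasFDerivAt (fun q => (V q).1)
      ((ContinuousLinearMap.fst ℝ ℝ ℝ).comp L) p := hd.hasFDerivAt.fst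
  have hw : HasFDerivAt (fun q => (V q).2)
      ((ContinuousLinearMap.snd ℝ ℝ ℝ).comp L) p := hd.hasFDerivAt.snd
  have hsum := (hv.mul hv).add (hw.mul hw)
  have hzero : HasFDerivAt (fun q => (V q).1 * (V q).1 + (V q).2 * (V q).2)
      (0 : (ℝ × ℝ) →L[ℝ] ℝ) p := by
    have : (fun q => (V q).1 * (V q).1 + (V q).2 * (V q).2) = fun _ => (1 : ℝ) := by
      funext q
      have := hunit q
      nlinarith [this]
    rw [this]; exact hasFDerivAt_const 1 p
  have hEq := hsum.unique hzero
  have e1 := congrArg (fun T : (ℝ × ℝ) →L[ℝ] ℝ => T (1, 0)) hEq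
  have e2 := congrArg (fun T : (ℝ × ℝ) →L[ℝ] ℝ => T (0, 1)) hEq
  simp only [ContinuousLinearMap.add_apply, ContinuousLinearMap.smul_apply,
    ContinuousLinearMap.coe_comp', Function.comp_apply,
    ContinuousLinearMap.coe_fst', ContinuousLinearMap.coe_snd',
    ContinuousLinearMap.zero_apply, smul_eq_mul] at e1 e2
  have hdivp := hdiv p
  rw [← hL] at hdivp
  have hdir : ((V p).2, -(V p).1) =
      (V p).2 • ((1 : ℝ), (0 : ℝ)) + (-(V p).1) • ((0 : ℝ), (1 : ℝ)) := by
    simp [Prod.ext_iff]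
  constructor
  · rw [hv.fderiv]
    simp only [ContinuousLinearMap.coe_comp', Function.comp_apply,
      ContinuousLinearMap.coe_fst', hdir, map_add, map_smul, Prod.fst_add,
      Prod.smul_fst, smul_eq_mul]
    linear_combination (V p).2 * hdivp - (1/2) * e2
  · rw [hw.fderiv]
    simp only [ContinuousLinearMap.coe_comp', Function.comp_apply,
      ContinuousLinearMap.coe_snd', hdir, map_add, map_smul, Prod.snd_add,
      Prod.smul_snd, smul_eq_mul]
    linear_combination (1/2) * e1 - (V p).1 * hdivp
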